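/- Let G be a finite simple graph and v a vertex of G. If there exists a vertex w ∈ N(v) with N[w] ⊆ N[v], then φ(G) ≤ φ(G − v) + Σ_{u ∈ N(v)} φ(G − (N[v] ∪ N[u])), where the sum is over all neighbors u of v. -/

import Mathlib

open SimpleGraph Finset

/-- `F` is a dissociation set of `G`: the induced subgraph `G[F]` has maximum degree at most 1,
i.e. every vertex of `F` has at most one neighbor inside `F`. -/
def IsDissocSet {V : Type*} (G : SimpleGraph V) (F : Set V) : Prop :=
  ∀ v ∈ F, ({u ∈ F | G.Adj v u} : Set V).ncard ≤ 1

/-- A maximal dissociation set: a dissociation set not properly contained in any other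
dissociation set. -/
def IsMaximalDissocSet {V : Type*} (G : SimpleGraph V) (F : Set V) : Prop :=
  IsDissocSet G F ∧ ∀ F' : Set V, IsDissocSet G F' → F ⊆ F' → F = F'

/-- `φ(G)`: the number of maximal dissociation sets of `G`. -/
noncomputable def numMaximalDissoc {V : Type*} (G : SimpleGraph V) : ℕ :=
  Set.ncard {F : Set V | IsMaximalDissocSet G F}

/-- `φ(G − S)`: the number of maximal dissociation sets of the subgraph of `G`
induced on the complement of `S`. -/
noncomputable def phiDel {V : Type*} (G : SimpleGraph V) (S : Set V) : ℕ :=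
  numMaximalDissoc (G.induce Sᶜ)

section Aux

variable {V : Type*} [Finite V] (G : SimpleGraph V)

lemma isDissocSet_mono {F F' : Set V} (h : IsDissocSet G F) (hsub : F' ⊆ F) :
    IsDissocSet G F' := by
  intro x hx
  refine le_trans (Set.ncard_le_ncard ?_ (Set.toFinite _)) (h x (hsub hx))
  intro u hu
  exact ⟨hsub hu.1, hu.2⟩

lemma ncard_preimage_val {S : Set V} {t : Set V} (ht : t ⊆ S) :
    ((Subtype.val : S → V) ⁻¹' t).ncard = t.ncard :=
  Set.ncard_preimage_of_injective_subset_range Subtype.val_injective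
    (by rwa [Subtype.range_val])

lemma sep_preimage_val (S : Set V) (F : Set V) (hF : F ⊆ S) (x : S) :
    {u' ∈ (Subtype.val : S → V) ⁻¹' F | (G.induce S).Adj x u'} =
      (Subtype.val : S → V) ⁻¹' {u ∈ F | G.Adj ↑x u} := by
  ext u'
  simp [comap_adj, SimpleGraph.induce, Set.mem_preimage, Set.mem_setOf_eq]

lemma dissoc_preimage_iff (S : Set V) {F : Set V} (hF : F ⊆ S) :
    IsDissocSet (G.induce S) ((Subtype.val : S → V) ⁻¹' F) ↔ IsDissocSet G F := by
  constructor
  · intro h x hx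
    have hx' : (⟨x, hF hx⟩ : S) ∈ (Subtype.val : S → V) ⁻¹' F := hx
    have := h _ hx'
    rwa [sep_preimage_val G S F hF, ncard_preimage_val (fun u hu => hF hu.1)] at this
  · intro h x hx
    rw [sep_preimage_val G S F hF, ncard_preimage_val (fun u hu => hF hu.1)]
    exact h _ hx

lemma maximal_preimage (S T F : Set V) (hF : IsMaximalDissocSet G F) (hT : F ∩ S = T)
    (hcond : ∀ F' : Set V, F' ⊆ Sᶜ → IsDissocSet G F' → IsDissocSet G (F' ∪ T)) :
    IsMaximalDissocSet (G.induce Sᶜ) ((Subtype.val : (Sᶜ : Set V) → V) ⁻¹' F) := by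
  have hpre : (Subtype.val : (Sᶜ : Set V) → V) ⁻¹' F =
      (Subtype.val : (Sᶜ : Set V) → V) ⁻¹' (F \ S) := by
    ext x; exact ⟨fun hx => ⟨hx, x.2⟩, fun hx => hx.1⟩
  constructor
  · rw [hpre, dissoc_preimage_iff G (Sᶜ) (fun x hx => hx.2)]
    exact isDissocSet_mono G hF.1 Set.diff_subset
  · intro F'' hF'' hsubset
    set F' : Set V := Subtype.val '' F'' with hF'def
    have hF'c : F' ⊆ Sᶜ := by rintro _ ⟨x, hx, rfl⟩; exact x.2
    have hpre' : (Subtype.val : (Sᶜ : Set V) → V) ⁻¹' F' = F'' :=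
      Set.preimage_image_eq _ Subtype.val_injective
    have hd : IsDissocSet G F' := by
      rw [← dissoc_preimage_iff G (Sᶜ) hF'c, hpre']; exact hF''
    have hdu : IsDissocSet G (F' ∪ T) := hcond F' hF'c hd
    have hFsub : F ⊆ F' ∪ T := by
      intro x hx
      by_cases hxS : x ∈ S
      · exact Or.inr (hT ▸ ⟨hx, hxS⟩)
      · exact Or.inl ⟨⟨x, hxS⟩, hsubset hx, rfl⟩
    have heq : F = F' ∪ T := hF.2 _ hdu hFsub
    have hTpre : (Subtype.val : (Sᶜ : Set V) → V) ⁻¹' T = ∅ := by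
      ext x
      simp only [Set.mem_preimage, Set.mem_empty_iff_false, iff_false]
      intro hxT
      exact x.2 (hT ▸ hxT : (x : V) ∈ F ∩ S).2
    rw [heq, Set.preimage_union, hTpre, Set.union_empty, hpre']

lemma ncard_biUnion_le {α β : Type*} [Finite β] (s : Finset α) (f : α → Set β) :
    (⋃ a ∈ s, f a).ncard ≤ ∑ a ∈ s, (f a).ncard := by
  classical
  induction s using Finset.induction with
  | empty => simp
  | insert _ _ h ih =>
    rw [Finset.sum_insert h, Finset.set_biUnion_insert]
    exact le_trans (Set.ncard_union_le _ _) (add_le_add_right ih _)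

lemma dissoc_union_pair {v u : V} (huv : G.Adj v u) (F' : Set V)
    (hF' : F' ⊆ (insert v (G.neighborSet v) ∪ insert u (G.neighborSet u))ᶜ)
    (hd : IsDissocSet G F') : IsDissocSet G (F' ∪ {v, u}) := by
  have hnv : ∀ y ∈ F', ¬ G.Adj v y := fun y hy h =>
    hF' hy (Or.inl (Set.mem_insert_iff.mpr (Or.inr h)))
  have hnu : ∀ y ∈ F', ¬ G.Adj u y := fun y hy h =>
    hF' hy (Or.inr (Set.mem_insert_iff.mpr (Or.inr h)))
  intro x hx
  rcases hx with hx | hx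
  · have : {y ∈ F' ∪ {v, u} | G.Adj x y} = {y ∈ F' | G.Adj x y} := by
      ext y
      simp only [Set.mem_setOf_eq, Set.mem_union, Set.mem_insert_iff, Set.mem_singleton_iff]
      constructor
      · rintro ⟨hy | hy | hy, hadj⟩
        · exact ⟨hy, hadj⟩
        · exact absurd hadj.symm (hy ▸ hnv x hx)
        · exact absurd hadj.symm (hy ▸ hnu x hx)
      · rintro ⟨hy, hadj⟩; exact ⟨Or.inl hy, hadj⟩
    rw [this]; exact hd x hx
  · rcases hx with rfl | rfl
    · have : {y ∈ F' ∪ {x, u} | G.Adj x y} = {u} := by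
        ext y
        simp only [Set.mem_setOf_eq, Set.mem_union, Set.mem_insert_iff, Set.mem_singleton_iff]
        constructor
        · rintro ⟨hy | hy | hy, hadj⟩
          · exact absurd hadj (hnv y hy)
          · exact absurd (hy ▸ hadj) G.irrefl
          · exact hy
        · rintro rfl; exact ⟨Or.inr (Or.inr rfl), huv⟩
      rw [this, Set.ncard_singleton]
    · have : {y ∈ F' ∪ {v, x} | G.Adj x y} = {v} := by
        ext y
        simp only [Set.mem_setOf_eq, Set.mem_union, Set.mem_insert_iff, Set.mem_singleton_iff]
        constructor
        · rintro ⟨hy | hy | hy, hadj⟩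
          · exact absurd hadj (hnu y hy)
          · exact hy
          · exact absurd (hy ▸ hadj) G.irrefl
        · rintro rfl; exact ⟨Or.inr (Or.inl rfl), huv.symm⟩
      rw [this, Set.ncard_singleton]

lemma dissoc_union_single {v : V} (F' : Set V)
    (hF' : F' ⊆ (insert v (G.neighborSet v))ᶜ)
    (hd : IsDissocSet G F') : IsDissocSet G (F' ∪ {v}) := by
  have hnv : ∀ y ∈ F', ¬ G.Adj v y := fun y hy h =>
    hF' hy (Set.mem_insert_iff.mpr (Or.inr h))
  intro x hx
  rcases hx with hx | hx
  · have : {y ∈ F' ∪ {v} | G.Adj x y} = {y ∈ F' | G.Adj x y} := by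
      ext y
      simp only [Set.mem_setOf_eq, Set.mem_union, Set.mem_singleton_iff]
      constructor
      · rintro ⟨hy | hy, hadj⟩
        · exact ⟨hy, hadj⟩
        · exact absurd hadj.symm (hy ▸ hnv x hx)
      · rintro ⟨hy, hadj⟩; exact ⟨Or.inl hy, hadj⟩
    rw [this]; exact hd x hx
  · rcases hx with rfl
    have : {y ∈ F' ∪ {x} | G.Adj x y} = ∅ := by
      ext y
      simp only [Set.mem_setOf_eq, Set.mem_union, Set.mem_singleton_iff,
        Set.mem_empty_iff_false, iff_false, not_and]
      rintro (hy | rfl)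
      · exact hnv y hy
      · exact fun h => G.irrefl h
    rw [this]; simp

end Aux

theorem numMaximalDissoc_le_rec_of_dominated {V : Type*} [Fintype V] (G : SimpleGraph V)
    [DecidableRel G.Adj] (v w : V) (hw : w ∈ G.neighborSet v)
    (hsub : insert w (G.neighborSet w) ⊆ insert v (G.neighborSet v)) :
    numMaximalDissoc G ≤
      phiDel G {v} +
        ∑ u ∈ G.neighborFinset v,
          phiDel G (insert v (G.neighborSet v) ∪ insert u (G.neighborSet u)) := by
  classical
  have hvw : G.Adj v w := hw
  set A₀ : Set (Set V) := {F : Set V | IsMaximalDissocSet G F ∧ v ∉ F} with hA₀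
  set B : V → Set (Set V) := fun u =>
    {F : Set V | IsMaximalDissocSet G F ∧ v ∈ F ∧
      (({y ∈ F | G.Adj v y} = ({u} : Set V)) ∨
        (u = w ∧ {y ∈ F | G.Adj v y} = (∅ : Set V)))} with hB
  -- the cover
  have hcover : {F : Set V | IsMaximalDissocSet G F} ⊆
      A₀ ∪ ⋃ u ∈ G.neighborFinset v, B u := by
    intro F hF
    by_cases hvF : v ∈ F
    · right
      have ht : ({y ∈ F | G.Adj v y} : Set V).ncard ≤ 1 := hF.1 v hvF
      by_cases hte : ({y ∈ F | G.Adj v y} : Set V) = ∅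
      · exact Set.mem_biUnion ((by rw [SimpleGraph.mem_neighborFinset]; exact hvw : w ∈ G.neighborFinset v))
          ⟨hF, hvF, Or.inr ⟨rfl, hte⟩⟩
      · have hne : ({y ∈ F | G.Adj v y} : Set V).Nonempty :=
          Set.nonempty_iff_ne_empty.mpr hte
        have h1 : ({y ∈ F | G.Adj v y} : Set V).ncard = 1 := by
          refine le_antisymm ht ?_
          have := Set.ncard_pos (Set.toFinite _) |>.mpr hne
          omega
        obtain ⟨u, hu⟩ := Set.ncard_eq_one.mp h1
        have huadj : G.Adj v u := by
          have : u ∈ ({y ∈ F | G.Adj v y} : Set V) := hu ▸ rfl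
          exact this.2
        exact Set.mem_biUnion ((by rw [SimpleGraph.mem_neighborFinset]; exact huadj : u ∈ G.neighborFinset v))
          ⟨hF, hvF, Or.inl hu⟩
    · exact Or.inl ⟨hF, hvF⟩
  have step1 : numMaximalDissoc G ≤
      A₀.ncard + (⋃ u ∈ G.neighborFinset v, B u).ncard :=
    le_trans (Set.ncard_le_ncard hcover (Set.toFinite _)) (Set.ncard_union_le _ _)
  -- bound for A₀
  have bound0 : A₀.ncard ≤ phiDel G {v} := by
    refine Set.ncard_le_ncard_of_injOn
      (fun F => (Subtype.val : (({v} : Set V)ᶜ : Set V) → V) ⁻¹' F) ?_ ?_ (Set.toFinite _)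
    · rintro F ⟨hF, hvF⟩
      refine maximal_preimage G {v} ∅ F hF ?_ ?_
      · ext x
        simp only [Set.mem_inter_iff, Set.mem_singleton_iff, Set.mem_empty_iff_false, iff_false,
          not_and]
        rintro hxF rfl; exact hvF hxF
      · intro F' _ hd
        rwa [Set.union_empty]
    · rintro F₁ ⟨hF₁, hv₁⟩ F₂ ⟨hF₂, hv₂⟩ h
      have h' := congrArg (Set.image (Subtype.val : (({v} : Set V)ᶜ : Set V) → V)) h
      rw [Set.image_preimage_eq_inter_range, Set.image_preimage_eq_inter_range,
        Subtype.range_val] at h'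
      have e1 : F₁ ∩ ({v} : Set V)ᶜ = F₁ :=
        Set.inter_eq_self_of_subset_left (fun x hx hxv => hv₁ (hxv ▸ hx))
      have e2 : F₂ ∩ ({v} : Set V)ᶜ = F₂ :=
        Set.inter_eq_self_of_subset_left (fun x hx hxv => hv₂ (hxv ▸ hx))
      rwa [e1, e2] at h'
  -- bound for each B u
  have bound1 : ∀ u ∈ G.neighborFinset v, (B u).ncard ≤
      phiDel G (insert v (G.neighborSet v) ∪ insert u (G.neighborSet u)) := by
    intro u hu
    have hvu : G.Adj v u := by rwa [SimpleGraph.mem_neighborFinset] at hu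
    set S : Set V := insert v (G.neighborSet v) ∪ insert u (G.neighborSet u) with hS
    have hSv : insert v (G.neighborSet v) ⊆ S := Set.subset_union_left
    -- compute F ∩ S for F ∈ B u
    have hTs : ∀ F ∈ B u, F ∩ S = {v, u} ∨ F ∩ S = {v} := by
      rintro F ⟨hF, hvF, hcase | ⟨rfl, hcase⟩⟩
      · left
        have huF : u ∈ F := by
          have hmem : u ∈ ({u} : Set V) := rfl
          rw [← hcase] at hmem
          exact hmem.1
        ext x
        simp only [Set.mem_inter_iff, Set.mem_insert_iff, Set.mem_singleton_iff]
        constructor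
        · rintro ⟨hxF, hxS⟩
          rcases hxS with (rfl | hxv) | (rfl | hxu)
          · exact Or.inl rfl
          · exact Or.inr (by
              have : x ∈ ({u} : Set V) := hcase ▸ (⟨hxF, hxv⟩ : x ∈ {y ∈ F | G.Adj v y})
              exact this)
          · exact Or.inr rfl
          · -- x ∈ N(u) ∩ F; u has at most one F-neighbor, which is v
            left
            have huc : ({y ∈ F | G.Adj u y} : Set V).ncard ≤ 1 := hF.1 u huF
            have hxm : x ∈ ({y ∈ F | G.Adj u y} : Set V) := ⟨hxF, hxu⟩
            have hvm : v ∈ ({y ∈ F | G.Adj u y} : Set V) := ⟨hvF, hvu.symm⟩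
            exact (Set.ncard_le_one (Set.toFinite _)).mp huc x hxm v hvm
        · rintro (rfl | rfl)
          · exact ⟨hvF, Or.inl (Or.inl rfl)⟩
          · exact ⟨huF, Or.inr (Or.inl rfl)⟩
      · right
        ext x
        simp only [Set.mem_inter_iff, Set.mem_singleton_iff]
        constructor
        · rintro ⟨hxF, hxS⟩
          have hxS' : x ∈ insert v (G.neighborSet v) := by
            rcases hxS with hxS | hxS
            · exact hxS
            · exact hsub hxS
          rcases hxS' with rfl | hxv
          · rfl
          · exact absurd (hcase ▸ (⟨hxF, hxv⟩ : x ∈ {y ∈ F | G.Adj v y}) : x ∈ (∅ : Set V))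
              (Set.notMem_empty x)
        · rintro rfl
          exact ⟨hvF, Or.inl (Or.inl rfl)⟩
    refine Set.ncard_le_ncard_of_injOn
      (fun F => (Subtype.val : (Sᶜ : Set V) → V) ⁻¹' F) ?_ ?_ (Set.toFinite _)
    · rintro F hFB
      obtain ⟨hF, hvF, -⟩ := id hFB
      rcases hTs F hFB with hT | hT
      · exact maximal_preimage G S {v, u} F hF hT
          (fun F' hF'c hd => dissoc_union_pair G hvu F' hF'c hd)
      · refine maximal_preimage G S {v} F hF hT ?_
        intro F' hF'c hd
        refine dissoc_union_single G F' ?_ hd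
        exact fun x hx => fun hxm => hF'c hx (hSv hxm)
    · intro F₁ hF₁ F₂ hF₂ h
      have h' := congrArg (Set.image (Subtype.val : (Sᶜ : Set V) → V)) h
      rw [Set.image_preimage_eq_inter_range, Set.image_preimage_eq_inter_range,
        Subtype.range_val] at h'
      have d1 : F₁ ∩ S ∪ F₁ ∩ Sᶜ = F₁ := Set.inter_union_compl F₁ S
      have d2 : F₂ ∩ S ∪ F₂ ∩ Sᶜ = F₂ := Set.inter_union_compl F₂ S
      have hmix : ∀ F F' : Set V, F ∈ B u → F' ∈ B u → F ∩ Sᶜ = F' ∩ Sᶜ →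
          F ∩ S = {v, u} → F' ∩ S = {v} → F' = F := by
        intro F F' hFB hF'B hcompl hT hT'
        have hsubFF : F' ⊆ F := by
          conv_lhs => rw [← Set.inter_union_compl F' S]
          conv_rhs => rw [← Set.inter_union_compl F S]
          rw [hT, hT', ← hcompl]
          exact Set.union_subset_union_left _ (by intro x hx; exact Or.inl hx)
        exact hF'B.1.2 F hFB.1.1 hsubFF
      rcases hTs F₁ hF₁ with hT₁ | hT₁ <;> rcases hTs F₂ hF₂ with hT₂ | hT₂
      · rw [← d1, ← d2, hT₁, hT₂, h']
      · exact (hmix F₁ F₂ hF₁ hF₂ h' hT₁ hT₂).symm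
      · exact hmix F₂ F₁ hF₂ hF₁ h'.symm hT₂ hT₁
      · rw [← d1, ← d2, hT₁, hT₂, h']
  calc numMaximalDissoc G ≤ A₀.ncard + (⋃ u ∈ G.neighborFinset v, B u).ncard := step1
    _ ≤ phiDel G {v} + ∑ u ∈ G.neighborFinset v, (B u).ncard :=
        add_le_add bound0 (ncard_biUnion_le _ _)
    _ ≤ phiDel G {v} + ∑ u ∈ G.neighborFinset v,
          phiDel G (insert v (G.neighborSet v) ∪ insert u (G.neighborSet u)) :=
        add_le_add_right (Finset.sum_le_sum bound1) _
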